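/- Let R be a Prüfer domain and P a nonzero nonmaximal prime that is branched and sharp. Then every proper P-primary ideal of R is divisorial. -/

import Mathlib

/-- An ideal is divisorial if `I = (R : (R : I))`, phrased via fractional ideals. -/
def IsDivisorial (R : Type*) [CommRing R] [IsDomain R] (I : Ideal R) : Prop :=
  (1 / (1 / (I : FractionalIdeal (nonZeroDivisors R) (FractionRing R))) :
    FractionalIdeal (nonZeroDivisors R) (FractionRing R))
    = (I : FractionalIdeal (nonZeroDivisors R) (FractionRing R))

/-- An ideal is invertible if it is a unit as a fractional ideal. -/
def IsInvertibleIdeal (R : Type*) [CommRing R] [IsDomain R] (I : Ideal R) : Prop :=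
  IsUnit (I : FractionalIdeal (nonZeroDivisors R) (FractionRing R))

/-- A Prüfer domain: every nonzero finitely generated ideal is invertible. -/
def IsPrufer (R : Type*) [CommRing R] [IsDomain R] : Prop :=
  ∀ I : Ideal R, I ≠ ⊥ → I.FG → IsInvertibleIdeal R I

/-- A prime `P` is sharp if it contains a finitely generated ideal contained
only in the maximal ideals that contain `P`. -/
def IsSharp (R : Type*) [CommRing R] (P : Ideal R) : Prop :=
  ∃ I : Ideal R, I.FG ∧ I ≤ P ∧ ∀ M : Ideal R, M.IsMaximal → I ≤ M → P ≤ M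

open FractionalIdeal in
/-- In a Prüfer domain, any two elements are locally comparable at each maximal ideal. -/
lemma prufer_local_compare {R : Type*} [CommRing R] [IsDomain R] (hR : IsPrufer R)
    (x y : R) (N : Ideal R) (hN : N.IsMaximal) :
    ∃ s t : R, s ∉ N ∧ (s * x = t * y ∨ s * y = t * x) := by
  have h1N : (1 : R) ∉ N := by
    intro h; exact hN.ne_top (Ideal.eq_top_of_isUnit_mem _ h isUnit_one)
  by_cases hx : x = 0
  · exact ⟨1, 0, h1N, Or.inl (by rw [hx, mul_zero, zero_mul])⟩
  set K := FractionRing R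
  set W : Ideal R := Ideal.span {x, y} with hW
  have hxW : x ∈ W := Ideal.subset_span (by simp)
  have hyW : y ∈ W := Ideal.subset_span (by simp)
  have hWbot : W ≠ ⊥ := fun h => hx (by rw [h] at hxW; simpa using hxW)
  have hWfg : W.FG := Submodule.fg_span (Set.toFinite _)
  obtain ⟨un, hun⟩ := hR W hWbot hWfg
  have hWV : (W : FractionalIdeal (nonZeroDivisors R) K) * ↑un⁻¹ = 1 := by
    rw [← hun]; exact un.mul_inv
  have h1 : (1 : K) ∈ ((W : FractionalIdeal (nonZeroDivisors R) K) * ↑un⁻¹) := by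
    rw [hWV]; exact one_mem_one _
  have h1' : (1 : K) ∈
      ((W : FractionalIdeal (nonZeroDivisors R) K) : Submodule R K) *
        ((↑un⁻¹ : FractionalIdeal (nonZeroDivisors R) K) : Submodule R K) := by
    rw [← coe_mul]; exact mem_coe.mpr h1
  -- decompose 1 = alg x * A + alg y * B with A B in the inverse
  have key : ∃ A B : K, A ∈ ((↑un⁻¹ : FractionalIdeal (nonZeroDivisors R) K) : Submodule R K) ∧
      B ∈ ((↑un⁻¹ : FractionalIdeal (nonZeroDivisors R) K) : Submodule R K) ∧
      (1 : K) = algebraMap R K x * A + algebraMap R K y * B := by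
    refine Submodule.mul_induction_on h1' ?_ ?_
    · intro w hw v hv
      obtain ⟨w', hw'W, hw'⟩ := (mem_coeIdeal _).mp (mem_coe.mp hw)
      obtain ⟨α, β, hαβ⟩ := Ideal.mem_span_pair.mp (hW ▸ hw'W)
      refine ⟨algebraMap R K α * v, algebraMap R K β * v, ?_, ?_, ?_⟩
      · have := Submodule.smul_mem
          ((↑un⁻¹ : FractionalIdeal (nonZeroDivisors R) K) : Submodule R K) α hv
        rwa [Algebra.smul_def] at this
      · have := Submodule.smul_mem
          ((↑un⁻¹ : FractionalIdeal (nonZeroDivisors R) K) : Submodule R K) β hv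
        rwa [Algebra.smul_def] at this
      · rw [← hw', ← hαβ]
        push_cast [_root_.map_add, _root_.map_mul]
        ring
    · rintro z₁ z₂ ⟨A₁, B₁, hA₁, hB₁, h₁⟩ ⟨A₂, B₂, hA₂, hB₂, h₂⟩
      exact ⟨A₁ + A₂, B₁ + B₂, add_mem hA₁ hA₂, add_mem hB₁ hB₂, by
        rw [h₁, h₂]; ring⟩
  obtain ⟨A, B, hA, hB, hAB⟩ := key
  have hinj : Function.Injective (algebraMap R K) := IsFractionRing.injective R K
  -- products of elements of W with elements of the inverse land in R
  have hprod : ∀ w ∈ W, ∀ v ∈ ((↑un⁻¹ : FractionalIdeal (nonZeroDivisors R) K) : Submodule R K),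
      ∃ c : R, algebraMap R K c = algebraMap R K w * v := by
    intro w hw v hv
    have : algebraMap R K w * v ∈
        ((W : FractionalIdeal (nonZeroDivisors R) K) * ↑un⁻¹ :
          FractionalIdeal (nonZeroDivisors R) K) :=
      mul_mem_mul ((mem_coeIdeal _).mpr ⟨w, hw, rfl⟩) (mem_coe.mp hv)
    rw [hWV] at this
    exact mem_one_iff _ |>.mp this
  obtain ⟨a', ha'⟩ := hprod x hxW A hA
  obtain ⟨b', hb'⟩ := hprod x hxW B hB
  obtain ⟨c', hc'⟩ := hprod y hyW A hA
  obtain ⟨d', hd'⟩ := hprod y hyW B hB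
  have hsum : a' + d' = 1 := by
    apply hinj
    rw [_root_.map_add, _root_.map_one, ha', hd', hAB]
  by_cases haN : a' ∈ N
  · have hd'N : d' ∉ N := fun h => h1N (hsum ▸ N.add_mem haN h)
    refine ⟨d', b', hd'N, Or.inl ?_⟩
    apply hinj
    rw [_root_.map_mul, _root_.map_mul, hd', hb']
    ring
  · refine ⟨a', c', haN, Or.inr ?_⟩
    apply hinj
    rw [_root_.map_mul, _root_.map_mul, ha', hc']
    ring

open FractionalIdeal in
/-- For a nonzero nonmaximal branched sharp prime `P` of a Prüfer domain, every
proper `P`-primary ideal is divisorial. -/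
theorem primary_divisorial_of_branched_sharp (R : Type*) [CommRing R] [IsDomain R]
    (hR : IsPrufer R) (P : Ideal R) (hP : P.IsPrime) (h0 : P ≠ ⊥)
    (hnm : ¬ P.IsMaximal) (hsharp : IsSharp R P)
    (hbr : ∃ Q : Ideal R, Q.IsPrimary ∧ Q.radical = P ∧ Q ≠ P) :
    ∀ Q : Ideal R, Q.IsPrimary → Q.radical = P → Q ≠ P → IsDivisorial R Q := by
  intro Q hQp hQrad hQne
  classical
  set K := FractionRing R
  obtain ⟨I, hIfg, hIP, hImax⟩ := hsharp
  have hQP : Q ≤ P := hQrad ▸ Ideal.le_radical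
  obtain ⟨-, hprim0⟩ := Ideal.isPrimary_iff.mp hQp
  have hprim : ∀ {a b : R}, a * b ∈ Q → a ∈ Q ∨ b ∈ P := by
    intro a b h
    rcases hprim0 h with h' | h'
    · exact Or.inl h'
    · exact Or.inr (hQrad ▸ h')
  have hQbot : Q ≠ ⊥ := by
    rintro rfl
    rw [Ideal.radical_bot_of_noZeroDivisors] at hQrad
    exact h0 hQrad.symm
  obtain ⟨a, haQ, ha0⟩ := Submodule.ne_bot_iff Q |>.mp hQbot
  -- the finitely generated "sharp" ideal B with a power inside Q
  set B : Ideal R := I ⊔ Ideal.span {a} with hB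
  have haB : a ∈ B := le_sup_right (α := Ideal R) (Ideal.subset_span rfl)
  have hBfg : B.FG := Submodule.FG.sup hIfg (Submodule.fg_span (Set.toFinite _))
  have hBP : B ≤ P := sup_le hIP ((Ideal.span_le).mpr (by simpa using hQP haQ))
  obtain ⟨k, hkQ⟩ := Ideal.exists_pow_le_of_le_radical_of_fg (hQrad ▸ hBP) hBfg
  have hakJ : a ^ k ∈ B ^ k := Ideal.pow_mem_pow haB k
  have hak0 : a ^ k ≠ 0 := pow_ne_zero _ ha0
  -- a maximal ideal over P and an element outside P
  obtain ⟨M₀, hM₀max, hPM₀⟩ := Ideal.exists_le_maximal P hP.ne_top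
  have hPneM₀ : P ≠ M₀ := fun h => hnm (h ▸ hM₀max)
  obtain ⟨m, hmM₀, hmP⟩ : ∃ m ∈ M₀, m ∉ P := by
    by_contra h
    push_neg at h
    exact hPneM₀ (le_antisymm hPM₀ h)
  -- main construction: separate any r ∉ Q from Q by a finitely generated ideal
  have main : ∀ r : R, r ∉ Q → ∃ I' : Ideal R, Q ≤ I' ∧ r ∉ I' ∧ I'.FG ∧ I' ≠ ⊥ := by
    intro r hrQ
    refine ⟨Ideal.span {r * m} ⊔ B ^ k, ?_, ?_, ?_, ?_⟩
    · -- Q ≤ I'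
      intro q hq
      by_cases hq0 : q = 0
      · rw [hq0]; exact zero_mem _
      -- quasi-local check via the colon ideal
      set I' : Ideal R := Ideal.span {r * m} ⊔ B ^ k with hI'
      have hcolon : I'.colon (Ideal.span {q}) = ⊤ := by
        by_contra hne
        obtain ⟨N, hNmax, hTN⟩ := Ideal.exists_le_maximal _ hne
        have : ∃ σ : R, σ ∉ N ∧ σ * q ∈ I' := by
          by_cases hBN : B ≤ N
          · have hPN : P ≤ N := hImax N hNmax (le_trans le_sup_left hBN)
            obtain ⟨s, t, hsN, hst⟩ := prufer_local_compare hR q r N hNmax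
            rcases hst with hst | hst
            · -- s * q = t * r
              obtain ⟨s', t', hs'N, hst'⟩ := prufer_local_compare hR t m N hNmax
              rcases hst' with hst' | hst'
              · -- s' * t = t' * m
                refine ⟨s * s', fun h => ?_, ?_⟩
                · rcases hNmax.isPrime.mem_or_mem h with h | h
                  exacts [hsN h, hs'N h]
                · have : (s * s') * q = t' * (r * m) := by
                    calc (s * s') * q = s' * (s * q) := by ring
                    _ = s' * (t * r) := by rw [hst]
                    _ = (s' * t) * r := by ring
                    _ = (t' * m) * r := by rw [hst']
                    _ = t' * (r * m) := by ring
                  rw [this]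
                  exact le_sup_left (α := Ideal R)
                    (Ideal.mul_mem_left _ _ (Ideal.subset_span rfl))
              · -- s' * m = t' * t : impossible
                exfalso
                have hmem : r * (s' * m) ∈ Q := by
                  have : r * (s' * m) = t' * (s * q) := by
                    calc r * (s' * m) = (s' * m) * r := by ring
                    _ = (t' * t) * r := by rw [hst']
                    _ = t' * (t * r) := by ring
                    _ = t' * (s * q) := by rw [hst]
                  rw [this]
                  exact Ideal.mul_mem_left _ _ (Ideal.mul_mem_left _ _ hq)
                rcases hprim hmem with h | h
                · exact hrQ h
                · rcases hP.mem_or_mem h with h | h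
                  · exact hs'N (hPN h)
                  · exact hmP h
            · -- s * r = t * q : impossible
              exfalso
              have hmem : r * s ∈ Q := by
                rw [mul_comm, hst]
                exact Ideal.mul_mem_left _ _ hq
              rcases hprim hmem with h | h
              · exact hrQ h
              · exact hsN (hPN h)
          · obtain ⟨b, hbB, hbN⟩ := SetLike.not_le_iff_exists.mp hBN
            refine ⟨b ^ k, fun h => hbN (hNmax.isPrime.mem_of_pow_mem _ h), ?_⟩
            exact le_sup_right (α := Ideal R)
              (Ideal.mul_mem_right _ _ (Ideal.pow_mem_pow hbB k))
        obtain ⟨σ, hσN, hσq⟩ := this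
        exact hσN (hTN (Ideal.mem_colon_span_singleton.mpr hσq))
      have : (1 : R) ∈ I'.colon (Ideal.span {q}) := hcolon ▸ Submodule.mem_top
      simpa using Ideal.mem_colon_span_singleton.mp this
    · -- r ∉ I'
      intro hmem
      obtain ⟨c, j, hjJ, hcj⟩ := Ideal.mem_span_singleton_sup.mp hmem
      have hrQ' : r * (1 - c * m) ∈ Q := by
        have : r * (1 - c * m) = j := by
          linear_combination -hcj
        rw [this]
        exact hkQ hjJ
      rcases hprim hrQ' with h | h
      · exact hrQ h
      · have h1 : (1 : R) ∈ M₀ := by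
          have := M₀.add_mem (hPM₀ h) (M₀.mul_mem_left c hmM₀)
          simpa using this
        exact hM₀max.ne_top (Ideal.eq_top_of_isUnit_mem _ h1 isUnit_one)
    · exact (Submodule.fg_span (Set.toFinite _)).sup (Submodule.FG.pow hBfg k)
    · intro h
      have : a ^ k ∈ (⊥ : Ideal R) := h ▸ le_sup_right (α := Ideal R) hakJ
      exact hak0 (by simpa using this)
  -- now the fractional ideal computation
  set Qc : FractionalIdeal (nonZeroDivisors R) K := (Q : FractionalIdeal (nonZeroDivisors R) K)
    with hQc
  have hQc0 : Qc ≠ 0 := by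
    rw [hQc, Ne, coeIdeal_eq_zero]
    exact hQbot
  unfold IsDivisorial
  have hone_mem : (1 : K) ∈ 1 / Qc := by
    rw [mem_div_iff_of_ne_zero hQc0]
    intro y hy
    rw [one_mul]
    exact coeIdeal_le_one hy
  have h1div0 : 1 / Qc ≠ 0 := by
    intro h
    rw [h] at hone_mem
    exact one_ne_zero ((mem_zero_iff _).mp hone_mem)
  apply le_antisymm
  · -- 1 / (1/Qc) ≤ Qc
    intro z hz
    have Hz : ∀ w ∈ 1 / Qc, z * w ∈ (1 : FractionalIdeal (nonZeroDivisors R) K) :=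
      (mem_div_iff_of_ne_zero h1div0).mp hz
    obtain ⟨r, hr⟩ := mem_one_iff (nonZeroDivisors R) |>.mp (by simpa using Hz 1 hone_mem)
    suffices hrQ : r ∈ Q by exact (mem_coeIdeal _).mpr ⟨r, hrQ, hr⟩
    by_contra hrQ
    obtain ⟨I', hQI', hrI', hI'fg, hI'bot⟩ := main r hrQ
    obtain ⟨un, hun⟩ := hR I' hI'bot hI'fg
    have hinv : (↑un⁻¹ : FractionalIdeal (nonZeroDivisors R) K) * ↑I' = 1 := by
      rw [← hun]; exact un.inv_mul
    -- elements of the inverse are in 1 / Qc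
    have hVle : ∀ w ∈ (↑un⁻¹ : FractionalIdeal (nonZeroDivisors R) K), w ∈ 1 / Qc := by
      intro w hw
      rw [mem_div_iff_of_ne_zero hQc0]
      intro y hy
      have hy' : y ∈ (I' : FractionalIdeal (nonZeroDivisors R) K) :=
        (coeIdeal_le_coeIdeal K).mpr hQI' hy
      have := mul_mem_mul hw hy'
      rwa [hinv] at this
    -- z times anything in un⁻¹ * I' is in I'
    have key : ∀ ζ ∈ ((↑un⁻¹ : FractionalIdeal (nonZeroDivisors R) K) : Submodule R K) *
        ((I' : FractionalIdeal (nonZeroDivisors R) K) : Submodule R K),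
        z * ζ ∈ ((I' : FractionalIdeal (nonZeroDivisors R) K) : Submodule R K) := by
      intro ζ hζ
      refine Submodule.mul_induction_on hζ ?_ ?_
      · intro w hw i hi
        obtain ⟨c, hc⟩ := mem_one_iff _ |>.mp (Hz w (hVle w (mem_coe.mp hw)))
        have : z * (w * i) = c • i := by
          rw [Algebra.smul_def, hc]; ring
        rw [this]
        exact Submodule.smul_mem _ _ hi
      · intro ζ₁ ζ₂ h₁ h₂
        rw [mul_add]
        exact Submodule.add_mem _ h₁ h₂
    have h1mem : (1 : K) ∈ ((↑un⁻¹ : FractionalIdeal (nonZeroDivisors R) K) : Submodule R K) *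
        ((I' : FractionalIdeal (nonZeroDivisors R) K) : Submodule R K) := by
      rw [← coe_mul, hinv]
      exact mem_coe.mpr (one_mem_one _)
    have hzI' : z ∈ (I' : FractionalIdeal (nonZeroDivisors R) K) := by
      have := key 1 h1mem
      rw [mul_one] at this
      exact mem_coe.mp this
    obtain ⟨r', hr'I, hr'⟩ := (mem_coeIdeal _).mp hzI'
    have : r' = r := IsFractionRing.injective R K (by rw [hr', hr])
    exact hrI' (this ▸ hr'I)
  · -- Qc ≤ 1 / (1/Qc)
    intro z hz
    have hz' : z ∈ Qc := hz
    show z ∈ 1 / (1 / Qc)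
    rw [mem_div_iff_of_ne_zero h1div0]
    intro w hw
    have := (mem_div_iff_of_ne_zero hQc0).mp hw z hz'
    rwa [mul_comm] at this
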